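/- Let L be an 8-dimensional Lie algebra over a field with basis x₁, ..., x₈ and nonzero brackets [x₁,x₂] = x₆, [x₁,x₄] = x₈, [x₃,x₅] = x₈, [x₂,x₇] = α₂x₈, [x₄,x₇] = x₈ (all other brackets of basis elements zero), where α₂ = 0. Then L is isomorphic to the direct sum H(1) ⊕ H(2) of Heisenberg Lie algebras of dimensions 3 and 5. -/

import Mathlib

/-- The Lie algebra `H(1) ⊕ H(2)`: carrier `((Fin 2 → K) × K) × ((Fin 4 → K) × K)`,
each factor a Heisenberg Lie algebra with the second coordinate its centre. -/
abbrev H1H2 (K : Type*) : Type _ := ((Fin 2 → K) × K) × ((Fin 4 → K) × K)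

namespace H1H2

variable {K : Type*} [Field K]

def w2 (a b : Fin 2 → K) : K := a 0 * b 1 - a 1 * b 0

def w4 (a b : Fin 4 → K) : K := a 0 * b 1 - a 1 * b 0 + (a 2 * b 3 - a 3 * b 2)

/-- The bracket on `H(1) ⊕ H(2)`. -/
def brkt (x y : H1H2 K) : H1H2 K := ((0, w2 x.1.1 y.1.1), (0, w4 x.2.1 y.2.1))

instance : LieRing (H1H2 K) :=
  { (inferInstance : AddCommGroup (H1H2 K)) with
    bracket := brkt
    add_lie := fun x y z => by
      show brkt (x + y) z = brkt x z + brkt y z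
      simp only [brkt, w2, w4, Prod.ext_iff, Prod.fst_add, Prod.snd_add, Prod.mk_add_mk,
        Pi.add_apply, add_zero]
      exact ⟨⟨by simp, by ring⟩, ⟨by simp, by ring⟩⟩
    lie_add := fun x y z => by
      show brkt x (y + z) = brkt x y + brkt x z
      simp only [brkt, w2, w4, Prod.ext_iff, Prod.fst_add, Prod.snd_add, Prod.mk_add_mk,
        Pi.add_apply, add_zero]
      exact ⟨⟨by simp, by ring⟩, ⟨by simp, by ring⟩⟩
    lie_self := fun x => by
      show brkt x x = 0
      simp only [brkt, w2, w4, Prod.ext_iff, Prod.fst_zero, Prod.snd_zero]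
      exact ⟨⟨by simp, by ring⟩, ⟨by simp, by ring⟩⟩
    leibniz_lie := fun x y z => by
      show brkt x (brkt y z) = brkt (brkt x y) z + brkt y (brkt x z)
      simp only [brkt, w2, w4, Prod.ext_iff, Prod.fst_add, Prod.snd_add, Prod.mk_add_mk,
        Pi.zero_apply, add_zero]
      exact ⟨⟨by simp, by ring⟩, ⟨by simp, by ring⟩⟩ }

instance : LieAlgebra K (H1H2 K) :=
  { (inferInstance : Module K (H1H2 K)) with
    lie_smul := fun a x y => by
      show brkt x (a • y) = a • brkt x y
      simp only [brkt, w2, w4, Prod.ext_iff, Prod.smul_fst, Prod.smul_snd, Prod.smul_mk,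
        Pi.smul_apply, smul_eq_mul, smul_zero]
      exact ⟨⟨by simp, by ring⟩, ⟨by simp, by ring⟩⟩ }

end H1H2


namespace Stmt3Aux

variable {K : Type*} [Field K]

lemma bracket_def (x y : H1H2 K) : ⁅x, y⁆ = H1H2.brkt x y := rfl

noncomputable def f : Fin 8 → H1H2 K :=
  ![((![1,0], 0), (![0,0,0,-1], 0)),
    ((![0,1], 0), (0, 0)),
    ((0, 0), (![1,0,0,0], 0)),
    ((0, 0), (![0,0,1,0], 0)),
    ((0, 0), (![0,1,0,0], 0)),
    ((0, 1), (0, 0)),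
    ((0, 0), (![0,0,0,1], 0)),
    ((0, 0), (0, 1))]

@[simp] lemma f_0 : f (K := K) 0 = ((![1,0], 0), (![0,0,0,-1], 0)) := rfl
@[simp] lemma f_1 : f (K := K) 1 = ((![0,1], 0), (0, 0)) := rfl
@[simp] lemma f_2 : f (K := K) 2 = ((0, 0), (![1,0,0,0], 0)) := rfl
@[simp] lemma f_3 : f (K := K) 3 = ((0, 0), (![0,0,1,0], 0)) := rfl
@[simp] lemma f_4 : f (K := K) 4 = ((0, 0), (![0,1,0,0], 0)) := rfl
@[simp] lemma f_5 : f (K := K) 5 = ((0, 1), (0, 0)) := rfl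
@[simp] lemma f_6 : f (K := K) 6 = ((0, 0), (![0,0,0,1], 0)) := rfl
@[simp] lemma f_7 : f (K := K) 7 = ((0, 0), (0, 1)) := rfl

variable {L : Type*} [LieRing L] [LieAlgebra K L]

noncomputable def psi (b : Module.Basis (Fin 8) K L) : H1H2 K →ₗ[K] L where
  toFun p := p.1.1 0 • (b 0 + b 6) + p.1.1 1 • b 1 + p.1.2 • b 5 +
    p.2.1 0 • b 2 + p.2.1 1 • b 4 + p.2.1 2 • b 3 + p.2.1 3 • b 6 + p.2.2 • b 7
  map_add' p q := by
    simp only [Prod.fst_add, Prod.snd_add, Pi.add_apply, add_smul]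
    module
  map_smul' a p := by
    simp only [Prod.smul_fst, Prod.smul_snd, Pi.smul_apply, smul_eq_mul, mul_smul,
      RingHom.id_apply]
    module

lemma psi_f (b : Module.Basis (Fin 8) K L) (i : Fin 8) : psi b (f i) = b i := by
  fin_cases i <;> (simp [psi, f_0, f_1, f_2, f_3, f_4, f_5, f_6, f_7]; try module)

end Stmt3Aux

/-- the 8-dimensional Lie algebra with nonzero brackets [x₁,x₂]=x₆, [x₁,x₄]=x₈, [x₃,x₅]=x₈, [x₄,x₇]=x₈ (the case α₂ = 0) is isomorphic to H(1) ⊕ H(2). -/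
theorem stmt_3 (K : Type*) [Field K] (L : Type*) [LieRing L] [LieAlgebra K L]
    (b : Module.Basis (Fin 8) K L)
    (h12 : ⁅b 0, b 1⁆ = b 5)
    (h14 : ⁅b 0, b 3⁆ = b 7)
    (h35 : ⁅b 2, b 4⁆ = b 7)
    (h47 : ⁅b 3, b 6⁆ = b 7)
    (hzero : ∀ i j : Fin 8,
      (i, j) ∉ ({(0,1),(1,0),(0,3),(3,0),(2,4),(4,2),(3,6),(6,3)} : Set (Fin 8 × Fin 8)) → ⁅b i, b j⁆ = 0) :
    Nonempty (L ≃ₗ⁅K⁆ H1H2 K) := by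
  classical
  open Stmt3Aux in
  let φ : L →ₗ[K] H1H2 K := b.constr K Stmt3Aux.f
  have hφb : ∀ i, φ (b i) = Stmt3Aux.f i := fun i => b.constr_basis K Stmt3Aux.f i
  have hn12 : ⁅b 1, b 0⁆ = -b 5 := by rw [← lie_skew, h12]
  have hn14 : ⁅b 3, b 0⁆ = -b 7 := by rw [← lie_skew, h14]
  have hn35 : ⁅b 4, b 2⁆ = -b 7 := by rw [← lie_skew, h35]
  have hn47 : ⁅b 6, b 3⁆ = -b 7 := by rw [← lie_skew, h47]
  have key0 : ∀ i j : Fin 8, φ ⁅b i, b j⁆ = ⁅φ (b i), φ (b j)⁆ := by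
    intro i j
    fin_cases i <;> fin_cases j <;>
      simp only [hφb, Fin.isValue, Fin.zero_eta, Fin.mk_one, Fin.reduceFinMk] <;>
      (first
        | rw [h12] | rw [h14] | rw [h35] | rw [h47]
        | rw [hn12] | rw [hn14] | rw [hn35] | rw [hn47]
        | rw [hzero _ _ (by decide)]) <;>
      simp only [map_neg, map_zero, hφb, Fin.isValue, Stmt3Aux.bracket_def] <;>
      simp [Stmt3Aux.f_0, Stmt3Aux.f_1, Stmt3Aux.f_2, Stmt3Aux.f_3, Stmt3Aux.f_4,
        Stmt3Aux.f_5, Stmt3Aux.f_6, Stmt3Aux.f_7, H1H2.brkt, H1H2.w2, H1H2.w4,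
        Prod.ext_iff, funext_iff, Fin.forall_fin_succ]
  have key : ∀ x y : L, φ ⁅x, y⁆ = ⁅φ x, φ y⁆ := by
    let B1 : L →ₗ[K] L →ₗ[K] H1H2 K := LinearMap.mk₂ K (fun x y => φ ⁅x, y⁆)
      (fun x x' y => show φ ⁅x + x', y⁆ = φ ⁅x, y⁆ + φ ⁅x', y⁆ by rw [add_lie, map_add])
      (fun a x y => show φ ⁅a • x, y⁆ = a • φ ⁅x, y⁆ by rw [smul_lie, map_smul])
      (fun x y y' => show φ ⁅x, y + y'⁆ = φ ⁅x, y⁆ + φ ⁅x, y'⁆ by rw [lie_add, map_add])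
      (fun a x y => show φ ⁅x, a • y⁆ = a • φ ⁅x, y⁆ by rw [lie_smul, map_smul])
    let B2 : L →ₗ[K] L →ₗ[K] H1H2 K := LinearMap.mk₂ K (fun x y => ⁅φ x, φ y⁆)
      (fun x x' y => show ⁅φ (x + x'), φ y⁆ = ⁅φ x, φ y⁆ + ⁅φ x', φ y⁆ by
        rw [map_add, add_lie])
      (fun a x y => show ⁅φ (a • x), φ y⁆ = a • ⁅φ x, φ y⁆ by rw [map_smul, smul_lie])
      (fun x y y' => show ⁅φ x, φ (y + y')⁆ = ⁅φ x, φ y⁆ + ⁅φ x, φ y'⁆ by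
        rw [map_add, lie_add])
      (fun a x y => show ⁅φ x, φ (a • y)⁆ = a • ⁅φ x, φ y⁆ by
        rw [map_smul]; exact lie_smul a (φ x) (φ y))
    have hB : B1 = B2 := b.ext fun i => b.ext fun j => key0 i j
    intro x y
    exact congrFun (congrArg (fun g => (DFunLike.coe (g x) : L → H1H2 K)) hB) y
  have hψφ : ∀ x, Stmt3Aux.psi b (φ x) = x := by
    have h : (Stmt3Aux.psi b).comp φ = LinearMap.id := by
      apply b.ext
      intro i
      simp [LinearMap.comp_apply, hφb, Stmt3Aux.psi_f]
    intro x
    simpa using congrArg (fun g => g x) h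
  have hφψ : ∀ p : H1H2 K, φ (Stmt3Aux.psi b p) = p := by
    intro p
    obtain ⟨⟨a, s⟩, ⟨c, t⟩⟩ := p
    simp only [Stmt3Aux.psi, LinearMap.coe_mk, AddHom.coe_mk, map_add, map_smul, hφb]
    simp [Stmt3Aux.f_0, Stmt3Aux.f_1, Stmt3Aux.f_2, Stmt3Aux.f_3, Stmt3Aux.f_4,
      Stmt3Aux.f_5, Stmt3Aux.f_6, Stmt3Aux.f_7, Prod.ext_iff, funext_iff, Fin.forall_fin_succ]
  exact ⟨{ toLinearMap := φ
           map_lie' := fun {x y} => key x y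
           invFun := Stmt3Aux.psi b
           left_inv := hψφ
           right_inv := hφψ }⟩
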